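/- Let X be an ℵ-space (a regular Hausdorff space with a σ-locally finite k-network). Then X is metrizable if and only if X is a Fréchet–Urysohn space satisfying property (α₄). -/

import Mathlib

open TopologicalSpace Filter Set

/-- A family `N` of subsets of a topological space `X` is a *k-network* if whenever `K ⊆ U`
with `K` compact and `U` open, there is a finite subfamily `F ⊆ N` with `K ⊆ ⋃₀ F ⊆ U`. -/
def IsKNetwork {X : Type*} [TopologicalSpace X] (N : Set (Set X)) : Prop :=
  ∀ K U : Set X, IsCompact K → IsOpen U → K ⊆ U →
    ∃ F : Set (Set X), F ⊆ N ∧ F.Finite ∧ K ⊆ ⋃₀ F ∧ ⋃₀ F ⊆ U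

/-- A family `N` of subsets of `X` is a *network* if for every `x` and every open `U ∋ x`
there is `A ∈ N` with `x ∈ A ⊆ U`. -/
def IsNetwork {X : Type*} [TopologicalSpace X] (N : Set (Set X)) : Prop :=
  ∀ (x : X) (U : Set X), IsOpen U → x ∈ U → ∃ A ∈ N, x ∈ A ∧ A ⊆ U

/-- A family of subsets is *locally finite* if every point has a neighbourhood meeting
only finitely many of its members. -/
def IsLocallyFiniteFamily {X : Type*} [TopologicalSpace X] (N : Set (Set X)) : Prop :=
  ∀ x : X, ∃ V ∈ nhds x, {A ∈ N | (A ∩ V).Nonempty}.Finite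

/-- A family of subsets is *σ-locally finite* if it is a countable union of locally finite
families. -/
def IsSigmaLocallyFinite {X : Type*} [TopologicalSpace X] (N : Set (Set X)) : Prop :=
  ∃ f : ℕ → Set (Set X), (∀ n, IsLocallyFiniteFamily (f n)) ∧ N = ⋃ n, f n

/-- An *ℵ-space* is a regular Hausdorff space with a σ-locally finite k-network. -/
def IsAlephSpace (X : Type*) [TopologicalSpace X] : Prop :=
  RegularSpace X ∧ T2Space X ∧ ∃ N : Set (Set X), IsSigmaLocallyFinite N ∧ IsKNetwork N

/-- An *ℵ₀-space* is a regular Hausdorff space with a countable k-network. -/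
def IsAleph0Space (X : Type*) [TopologicalSpace X] : Prop :=
  RegularSpace X ∧ T2Space X ∧ ∃ N : Set (Set X), N.Countable ∧ IsKNetwork N

/-- `X` has the property (α₄): for every point `x` and every countable family of sequences
all converging to `x`, one can pick a "diagonal" sequence through infinitely many
(distinct) rows converging to `x`. -/
def Alpha4Space (X : Type*) [TopologicalSpace X] : Prop :=
  ∀ (x : X) (u : ℕ → ℕ → X), (∀ m, Tendsto (u m) atTop (nhds x)) →
    ∃ m n : ℕ → ℕ, Function.Injective m ∧
      Tendsto (fun k => u (m k) (n k)) atTop (nhds x)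

/-- Every first countable space satisfies (α₄). -/
theorem Alpha4Space.of_firstCountable (X : Type*) [TopologicalSpace X]
    [FirstCountableTopology X] : Alpha4Space X := by
  intro x u hu
  obtain ⟨b, hb⟩ := (nhds x).exists_antitone_basis
  have hsel : ∀ k : ℕ, ∃ n, u k n ∈ b k := by
    intro k
    exact ((hu k).eventually (hb.1.mem_of_mem (by trivial))).exists
  choose n hn using hsel
  refine ⟨id, n, Function.injective_id, ?_⟩
  rw [hb.1.tendsto_right_iff]
  intro i _
  filter_upwards [eventually_ge_atTop i] with k hk
  exact hb.2 hk (hn k)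

namespace AlephProof


variable {X : Type*} [TopologicalSpace X]

/-- Open witness of local finiteness. -/
theorem exists_open_witness {𝒮 : Set (Set X)} (h : IsLocallyFiniteFamily 𝒮) (x : X) :
    ∃ V : Set X, IsOpen V ∧ x ∈ V ∧ {A ∈ 𝒮 | (A ∩ V).Nonempty}.Finite := by
  obtain ⟨V, hV, hfin⟩ := h x
  obtain ⟨W, hWV, hWopen, hxW⟩ := mem_nhds_iff.mp hV
  refine ⟨W, hWopen, hxW, hfin.subset ?_⟩
  rintro A ⟨hA, y, hy1, hy2⟩
  exact ⟨hA, y, hy1, hWV hy2⟩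

theorem isLocallyFiniteFamily_mono {𝒮 𝒯 : Set (Set X)} (h : IsLocallyFiniteFamily 𝒮)
    (hsub : 𝒯 ⊆ 𝒮) : IsLocallyFiniteFamily 𝒯 := by
  intro x
  obtain ⟨V, hV, hfin⟩ := h x
  exact ⟨V, hV, hfin.subset (fun A hA => ⟨hsub hA.1, hA.2⟩)⟩

/-- A locally finite family, as an indexed (subtype) family, is `LocallyFinite`. -/
theorem locallyFinite_of_isLocallyFiniteFamily {𝒮 : Set (Set X)} (h : IsLocallyFiniteFamily 𝒮) :
    LocallyFinite (fun A : 𝒮 => (A : Set X)) := by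
  intro x
  obtain ⟨V, hV, hfin⟩ := h x
  refine ⟨V, hV, ?_⟩
  have : ((fun A : 𝒮 => (A : Set X)) ⁻¹' {s | (s ∩ V).Nonempty}) ⊆
      (Subtype.val ⁻¹' {A ∈ 𝒮 | (A ∩ V).Nonempty}) := by
    rintro ⟨A, hA⟩ hA2
    exact ⟨hA, hA2⟩
  exact (hfin.preimage (Subtype.val_injective.injOn)).subset this

/-- The union of a locally finite family of closed sets is closed. -/
theorem isClosed_sUnion_of_locallyFinite {𝒮 : Set (Set X)} (h : IsLocallyFiniteFamily 𝒮)
    (hcl : ∀ A ∈ 𝒮, IsClosed A) : IsClosed (⋃₀ 𝒮) := by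
  rw [sUnion_eq_iUnion]
  exact (locallyFinite_of_isLocallyFiniteFamily h).isClosed_iUnion (fun A => hcl A A.2)

/-- Point-finiteness of a locally finite family. -/
theorem point_finite {𝒮 : Set (Set X)} (h : IsLocallyFiniteFamily 𝒮) (x : X) :
    {A ∈ 𝒮 | x ∈ A}.Finite := by
  obtain ⟨V, hVopen, hxV, hfin⟩ := exists_open_witness h x
  exact hfin.subset (fun A hA => ⟨hA.1, x, hA.2, hxV⟩)

/-- Capture lemma: if `N` is a k-network of closed sets and `z → x ∈ U` (open), some member
of `N` contains `x`, is contained in `U`, and contains `z k` for infinitely many `k`. -/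
theorem capture {N : Set (Set X)} (hk : IsKNetwork N) (hcl : ∀ A ∈ N, IsClosed A)
    {x : X} {U : Set X} (hU : IsOpen U) (hxU : x ∈ U) {z : ℕ → X}
    (hz : Tendsto z atTop (nhds x)) :
    ∃ A ∈ N, x ∈ A ∧ A ⊆ U ∧ {k | z k ∈ A}.Infinite := by
  -- find a tail inside U
  obtain ⟨k₀, hk₀⟩ := (hz.eventually (hU.mem_nhds hxU)).exists_forall_of_atTop
  set z' : ℕ → X := fun k => z (k + k₀) with hz'
  have hz't : Tendsto z' atTop (nhds x) := hz.comp (tendsto_add_atTop_nat k₀)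
  have hz'U : ∀ k, z' k ∈ U := fun k => hk₀ _ (Nat.le_add_left _ _)
  have hcpt : IsCompact (insert x (range z')) := hz't.isCompact_insert_range
  have hsub : insert x (range z') ⊆ U := by
    rintro y (rfl | ⟨k, rfl⟩)
    · exact hxU
    · exact hz'U k
  obtain ⟨F, hFN, hFfin, hcov, hFU⟩ := hk _ U hcpt hU hsub
  -- pigeonhole: some member of F contains infinitely many z' k
  have hchoice : ∀ k : ℕ, ∃ A ∈ F, z' k ∈ A := by
    intro k
    obtain ⟨A, hA, hzA⟩ := hcov (mem_insert_of_mem _ ⟨k, rfl⟩)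
    exact ⟨A, hA, hzA⟩
  choose c hcF hcz using hchoice
  have hinf : ∃ A ∈ F, {k | c k = A}.Infinite := by
    by_contra h
    push_neg at h
    have : (Set.univ : Set ℕ).Finite := by
      have : (Set.univ : Set ℕ) ⊆ ⋃ A ∈ F, {k | c k = A} := by
        intro k _
        exact mem_biUnion (hcF k) rfl
      exact (Set.Finite.biUnion hFfin (fun A hA => h A hA)).subset this
    exact Set.infinite_univ this
  obtain ⟨A, hAF, hAinf⟩ := hinf
  have hhits : {k | z' k ∈ A}.Infinite := hAinf.mono (by rintro k rfl; exact hcz k)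
  have hAN : A ∈ N := hFN hAF
  have hxA : x ∈ A := by
    rw [← (hcl A hAN).closure_eq]
    rw [mem_closure_iff_nhds]
    intro Z hZ
    have hev : ∀ᶠ k in atTop, z' k ∈ Z := hz't.eventually hZ
    obtain ⟨k₁, hk₁⟩ := hev.exists_forall_of_atTop
    obtain ⟨k, hkA, hk_ge⟩ := hhits.exists_gt k₁
    exact ⟨z' k, hk₁ k (le_of_lt hk_ge), hkA⟩
  refine ⟨A, hAN, hxA, fun y hy => hFU ⟨A, hAF, hy⟩, ?_⟩
  intro hfin
  have h2 : ((fun k : ℕ => k + k₀) ⁻¹' {k | z k ∈ A}).Finite :=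
    hfin.preimage (add_left_injective k₀).injOn
  exact hhits (h2.subset (fun k hk => hk))



variable {X : Type*} [TopologicalSpace X]

variable {M : ℕ → Set (Set X)}

theorem cl_union (hcl : ∀ n, ∀ A ∈ M n, IsClosed A) : ∀ A ∈ ⋃ n, M n, IsClosed A := by
  rintro A ⟨s, ⟨n, rfl⟩, hA⟩
  exact hcl n A hA

theorem Tx_countable (hlf : ∀ n, IsLocallyFiniteFamily (M n)) (x : X) : {A | A ∈ ⋃ n, M n ∧ x ∈ A}.Countable := by
  have : {A | A ∈ ⋃ n, M n ∧ x ∈ A} ⊆ ⋃ n, {A ∈ M n | x ∈ A} := by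
    rintro A ⟨⟨s, ⟨n, rfl⟩, hA⟩, hxA⟩
    exact mem_iUnion.mpr ⟨n, hA, hxA⟩
  exact (Set.countable_iUnion (fun n => (point_finite (hlf n) x).countable)).mono this

/-- The key server lemma: finite subfamilies whose union is a neighborhood. -/
theorem server (hlf : ∀ n, IsLocallyFiniteFamily (M n)) (hcl : ∀ n, ∀ A ∈ M n, IsClosed A)
    (hk : IsKNetwork (⋃ n, M n)) [FrechetUrysohnSpace X] (hA4 : Alpha4Space X)
    {x : X} {U : Set X} (hU : IsOpen U) (hxU : x ∈ U) :
    ∃ F : Set (Set X), F.Finite ∧ (∀ A ∈ F, (A ∈ ⋃ n, M n) ∧ x ∈ A ∧ A ⊆ U) ∧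
      ⋃₀ F ∈ nhds x := by
  classical
  set 𝒜 : Set (Set X) := {A | (A ∈ ⋃ n, M n) ∧ x ∈ A ∧ A ⊆ U} with h𝒜
  have hsub𝒜 : 𝒜 ⊆ {A | A ∈ ⋃ n, M n ∧ x ∈ A} := fun A hA => ⟨hA.1, hA.2.1⟩
  have hcnt : 𝒜.Countable := (Tx_countable hlf x).mono hsub𝒜
  have hne : 𝒜.Nonempty := by
    obtain ⟨A, hAN, hxA, hAU, _⟩ := capture hk (cl_union hcl) hU hxU
      (tendsto_const_nhds : Tendsto (fun _ : ℕ => x) atTop (nhds x))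
    exact ⟨A, hAN, hxA, hAU⟩
  obtain ⟨σ, hσ⟩ := hcnt.exists_eq_range hne
  set W : ℕ → Set X := fun m => ⋃ i ∈ Set.Iic m, σ i with hW
  have hmain : ∃ m, W m ∈ nhds x := by
    by_contra h
    push_neg at h
    -- each W m is not a neighborhood, so x is in the closure of its complement
    have hcls : ∀ m, x ∈ closure (W m)ᶜ := by
      intro m
      rw [mem_closure_iff_nhds]
      intro Z hZ
      rcases Set.not_subset.mp (fun hsub => h m (Filter.mem_of_superset hZ hsub)) with
        ⟨y, hyZ, hyW⟩
      exact ⟨y, hyZ, hyW⟩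
    have hseq : ∀ m : ℕ, ∃ u : ℕ → X, (∀ k, u k ∈ (W m)ᶜ) ∧ Tendsto u atTop (nhds x) := by
      intro m
      exact mem_closure_iff_seq_limit.mp (hcls m)
    choose u hu1 hu2 using hseq
    obtain ⟨mk, nk, hinj, htend⟩ := hA4 x u hu2
    obtain ⟨A, hAN, hxA, hAU, hinf⟩ := capture hk (cl_union hcl) hU hxU htend
    have hA𝒜 : A ∈ 𝒜 := ⟨hAN, hxA, hAU⟩
    rw [hσ] at hA𝒜
    obtain ⟨i₀, hi₀⟩ := hA𝒜
    have hbad : {k | mk k < i₀}.Finite := by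
      have : {k | mk k < i₀} = mk ⁻¹' (Set.Iio i₀) := rfl
      rw [this]
      exact (Set.finite_Iio i₀).preimage hinj.injOn
    obtain ⟨k, hkA, hk2⟩ := (hinf.diff hbad).nonempty
    simp only [mem_setOf_eq, not_lt, mem_diff] at hkA hk2
    have : u (mk k) (nk k) ∈ W (mk k) := by
      refine mem_biUnion (show i₀ ∈ Set.Iic (mk k) from hk2) ?_
      rw [hi₀]; exact hkA
    exact hu1 (mk k) (nk k) this
  obtain ⟨m, hm⟩ := hmain
  refine ⟨σ '' (Set.Iic m), (Set.finite_Iic m).image σ, ?_, ?_⟩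
  · rintro A ⟨i, _, rfl⟩
    have : σ i ∈ 𝒜 := by rw [hσ]; exact ⟨i, rfl⟩
    exact this
  · have : ⋃₀ (σ '' (Set.Iic m)) = W m := by
      rw [sUnion_image]
    rw [this]; exact hm


omit [TopologicalSpace X] in
theorem exists_level (hmono : Monotone M) {F : Set (Set X)} (hF : F.Finite)
    (hsub : F ⊆ ⋃ n, M n) : ∃ p, F ⊆ M p := by
  have hch : ∀ A : F, ∃ n, (A : Set X) ∈ M n := by
    rintro ⟨A, hA⟩
    exact mem_iUnion.mp (hsub hA)
  choose g hg using hch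
  haveI : Finite F := hF.to_subtype
  obtain ⟨p, hp⟩ := Set.Finite.bddAbove (Set.finite_range g)
  refine ⟨p, fun A hA => ?_⟩
  exact hmono (hp (mem_range_self (⟨A, hA⟩ : F))) (hg ⟨A, hA⟩)

theorem sigma_piece_closed (hlf : ∀ n, IsLocallyFiniteFamily (M n))
    (hcl : ∀ n, ∀ A ∈ M n, IsClosed A) (j : ℕ) (𝒮 : Set (Set X)) (h𝒮 : 𝒮 ⊆ M j) :
    IsClosed (⋃₀ 𝒮) := by
  refine isClosed_sUnion_of_locallyFinite (isLocallyFiniteFamily_mono (hlf j) h𝒮) ?_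
  exact fun A hA => hcl j A (h𝒮 hA)

/-- Every open set is the union of the closed pieces `⋃₀ {A ∈ M j | A ⊆ O}`. -/
theorem sigma_exhaust (hcl : ∀ n, ∀ A ∈ M n, IsClosed A) (hk : IsKNetwork (⋃ n, M n))
    {O : Set X} (hO : IsOpen O) :
    O = ⋃ j, ⋃₀ {A ∈ M j | A ⊆ O} := by
  apply Set.Subset.antisymm
  · intro x hx
    obtain ⟨A, hAN, hxA, hAO, _⟩ := capture hk (cl_union hcl) hO hx
      (tendsto_const_nhds : Tendsto (fun _ : ℕ => x) atTop (nhds x))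
    obtain ⟨s, ⟨j, rfl⟩, hAj⟩ := hAN
    exact mem_iUnion.mpr ⟨j, A, ⟨hAj, hAO⟩, hxA⟩
  · rintro x ⟨s, ⟨j, rfl⟩, A, ⟨_, hAO⟩, hxA⟩
    exact hAO hxA

/-- Collectionwise normality for disjoint locally finite closed families,
via servers. -/
theorem cwn (hlf : ∀ n, IsLocallyFiniteFamily (M n)) (hcl : ∀ n, ∀ A ∈ M n, IsClosed A)
    (hmono : Monotone M) (hk : IsKNetwork (⋃ n, M n)) [FrechetUrysohnSpace X]
    (hA4 : Alpha4Space X) {𝒟 : Set (Set X)} (h𝒟lf : IsLocallyFiniteFamily 𝒟)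
    (h𝒟cl : ∀ D ∈ 𝒟, IsClosed D)
    (h𝒟disj : ∀ D ∈ 𝒟, ∀ D' ∈ 𝒟, D ≠ D' → Disjoint D D') :
    ∃ G : Set X → Set X, (∀ D ∈ 𝒟, IsOpen (G D) ∧ D ⊆ G D) ∧
      (∀ D ∈ 𝒟, ∀ D' ∈ 𝒟, D ≠ D' → Disjoint (G D) (G D')) := by
  classical
  -- the complement of the other members is an open neighborhood
  have hUopen : ∀ D : Set X, IsOpen (⋃₀ (𝒟 \ {D}))ᶜ := by
    intro D
    rw [isOpen_compl_iff]
    refine isClosed_sUnion_of_locallyFinite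
      (isLocallyFiniteFamily_mono h𝒟lf Set.diff_subset) ?_
    exact fun A hA => h𝒟cl A hA.1
  have hch : ∀ x : X, x ∈ ⋃₀ 𝒟 → ∃ (D : Set X) (F : Set (Set X)) (p : ℕ),
      D ∈ 𝒟 ∧ x ∈ D ∧ F ⊆ M p ∧ (∀ A ∈ F, x ∈ A ∧ A ⊆ (⋃₀ (𝒟 \ {D}))ᶜ) ∧
      x ∈ interior (⋃₀ F) := by
    rintro x ⟨D, hD𝒟, hxD⟩
    have hxU : x ∈ (⋃₀ (𝒟 \ {D}))ᶜ := by
      intro hmem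
      obtain ⟨D', hD', hxD'⟩ := hmem
      exact (h𝒟disj D' hD'.1 D hD𝒟 (fun h => hD'.2 h) ).ne_of_mem hxD' hxD rfl
    obtain ⟨F, hFfin, hFprop, hFnhds⟩ := server hlf hcl hk hA4 (hUopen D) hxU
    obtain ⟨p, hp⟩ := exists_level hmono hFfin (fun A hA => (hFprop A hA).1)
    exact ⟨D, F, p, hD𝒟, hxD, hp, fun A hA => ⟨(hFprop A hA).2.1, (hFprop A hA).2.2⟩,
      mem_interior_iff_mem_nhds.mpr hFnhds⟩
  choose! Dx Fx px hDx𝒟 hxDx hFxsub hFxprop hxint using hch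
  -- the "poison" sets
  set K' : Set X → ℕ → Set X := fun D q =>
    ⋃₀ {A | A ∈ M q ∧ ∃ x, x ∈ ⋃₀ 𝒟 ∧ A ∈ Fx x ∧ px x = q ∧ Dx x ≠ D} with hK'
  have hK'closed : ∀ D q, IsClosed (K' D q) := by
    intro D q
    exact sigma_piece_closed hlf hcl q _ (fun A hA => hA.1)
  have hK'disj : ∀ D ∈ 𝒟, ∀ q, Disjoint (K' D q) D := by
    intro D hD q
    rw [Set.disjoint_left]
    rintro y ⟨A, ⟨hAq, x, hx, hAFx, hpx, hDne⟩, hyA⟩ hyD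
    have : A ⊆ (⋃₀ (𝒟 \ {Dx x}))ᶜ := (hFxprop x hx A hAFx).2
    exact this hyA ⟨D, ⟨hD, fun h => hDne (by rw [h])⟩, hyD⟩
  -- the open pieces
  set W : Set X → ℕ → Set X := fun D p =>
    ⋃₀ {V | ∃ x, x ∈ ⋃₀ 𝒟 ∧ Dx x = D ∧ px x = p ∧ V = interior (⋃₀ Fx x)} with hWdef
  have hWopen : ∀ D p, IsOpen (W D p) := by
    intro D p
    apply isOpen_sUnion
    rintro V ⟨x, hx, hDxx, hpxx, rfl⟩
    exact isOpen_interior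
  set G : Set X → Set X := fun D => ⋃ p, (W D p \ ⋃ q ∈ Set.Iic p, K' D q) with hG
  have hGopen : ∀ D, IsOpen (G D) := by
    intro D
    refine isOpen_iUnion fun p => (hWopen D p).sdiff ?_
    exact (Set.finite_Iic p).isClosed_biUnion (fun q _ => hK'closed D q)
  refine ⟨G, fun D hD => ⟨hGopen D, ?_⟩, ?_⟩
  · -- D ⊆ G D
    intro x hxD
    have hx𝒟 : x ∈ ⋃₀ 𝒟 := ⟨D, hD, hxD⟩
    have hDxeq : Dx x = D := by
      by_contra hne
      exact (h𝒟disj (Dx x) (hDx𝒟 x hx𝒟) D hD hne).ne_of_mem (hxDx x hx𝒟) hxD rfl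
    refine mem_iUnion.mpr ⟨px x, ?_, ?_⟩
    · exact ⟨interior (⋃₀ Fx x), ⟨x, hx𝒟, hDxeq, rfl, rfl⟩, hxint x hx𝒟⟩
    · intro hmem
      obtain ⟨q, _, hq⟩ := mem_iUnion₂.mp hmem
      exact (hK'disj D hD q).ne_of_mem hq hxD rfl
  · -- disjointness
    intro D hD D' hD' hne
    rw [Set.disjoint_left]
    intro y hyGD hyGD'
    obtain ⟨p, hyp⟩ := mem_iUnion.mp hyGD
    obtain ⟨p', hyp'⟩ := mem_iUnion.mp hyGD'
    obtain ⟨hyW, hyK⟩ := hyp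
    obtain ⟨hyW', hyK'⟩ := hyp'
    -- wlog p' ≤ p, handle both cases symmetrically
    rcases le_total p' p with hle | hle
    · -- y ∈ W D' p' ⊆ K' D p', contradiction with y ∉ ⋃ q ≤ p, K' D q
      apply hyK
      obtain ⟨V, ⟨x, hx, hDxx, hpxx, rfl⟩, hyV⟩ := hyW'
      have hyU : y ∈ ⋃₀ Fx x := interior_subset hyV
      obtain ⟨A, hAFx, hyA⟩ := hyU
      refine mem_iUnion₂.mpr ⟨p', hle, ?_⟩
      refine ⟨A, ⟨?_, x, hx, hAFx, hpxx, ?_⟩, hyA⟩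
      · rw [← hpxx]; exact hFxsub x hx hAFx
      · rw [hDxx]; exact fun h => hne h.symm
    · apply hyK'
      obtain ⟨V, ⟨x, hx, hDxx, hpxx, rfl⟩, hyV⟩ := hyW
      have hyU : y ∈ ⋃₀ Fx x := interior_subset hyV
      obtain ⟨A, hAFx, hyA⟩ := hyU
      refine mem_iUnion₂.mpr ⟨p, hle, ?_⟩
      refine ⟨A, ⟨?_, x, hx, hAFx, hpxx, ?_⟩, hyA⟩
      · rw [← hpxx]; exact hFxsub x hx hAFx
      · rw [hDxx]; exact fun h => hne h

/-- Normality, as a consequence of `cwn` applied to pairs. -/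
theorem normal (hlf : ∀ n, IsLocallyFiniteFamily (M n)) (hcl : ∀ n, ∀ A ∈ M n, IsClosed A)
    (hmono : Monotone M) (hk : IsKNetwork (⋃ n, M n)) [FrechetUrysohnSpace X]
    (hA4 : Alpha4Space X) : NormalSpace X := by
  constructor
  intro s t hs ht hd
  by_cases hst : s = t
  · subst hst
    have hse : s = ∅ :=
      Set.eq_empty_iff_forall_notMem.mpr (fun x hx => Set.disjoint_left.mp hd hx hx)
    subst hse
    exact ⟨∅, ∅, isOpen_empty, isOpen_empty, le_rfl, le_rfl, disjoint_empty _⟩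
  · have hpair : IsLocallyFiniteFamily ({s, t} : Set (Set X)) := by
      intro x
      exact ⟨Set.univ, Filter.univ_mem, (((Set.finite_singleton t).insert s)).subset (fun A hA => hA.1)⟩
    have hpaircl : ∀ D ∈ ({s, t} : Set (Set X)), IsClosed D := by
      rintro D (rfl | rfl)
      exacts [hs, ht]
    have hpairdisj : ∀ D ∈ ({s, t} : Set (Set X)), ∀ D' ∈ ({s, t} : Set (Set X)),
        D ≠ D' → Disjoint D D' := by
      rintro D (rfl | rfl) D' (rfl | rfl) hne
      · exact absurd rfl hne
      · exact hd
      · exact hd.symm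
      · exact absurd rfl hne
    obtain ⟨G, hG1, hG2⟩ := cwn hlf hcl hmono hk hA4 hpair hpaircl hpairdisj
    exact ⟨G s, G t, (hG1 s (by simp)).1, (hG1 t (by simp)).1, (hG1 s (by simp)).2,
      (hG1 t (by simp)).2, hG2 s (by simp) t (by simp) hst⟩

/-- For each level `n`, a σ-locally finite open covering collection, each of whose members
meets only finitely many members of `M n`. -/
theorem refine (hlf : ∀ n, IsLocallyFiniteFamily (M n)) (hcl : ∀ n, ∀ A ∈ M n, IsClosed A)
    (hmono : Monotone M) (hk : IsKNetwork (⋃ n, M n)) [FrechetUrysohnSpace X]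
    (hA4 : Alpha4Space X) (n : ℕ) :
    ∃ 𝒲 : ℕ → Set (Set X), (∀ i, IsLocallyFiniteFamily (𝒲 i)) ∧
      (∀ i, ∀ W ∈ 𝒲 i, IsOpen W ∧ {A ∈ M n | (A ∩ W).Nonempty}.Finite) ∧
      (∀ x : X, ∃ i, ∃ W ∈ 𝒲 i, x ∈ W) := by
  classical
  haveI hnorm : NormalSpace X := normal hlf hcl hmono hk hA4
  -- the families to be refined
  set ℛ : ℕ → Set (Set X) := fun m =>
    {A | A ∈ M m ∧ ∃ V, IsOpen V ∧ A ⊆ V ∧ {B ∈ M n | (B ∩ V).Nonempty}.Finite} with hℛ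
  have hℛsub : ∀ m, ℛ m ⊆ M m := fun m A hA => hA.1
  have hℛlf : ∀ m, IsLocallyFiniteFamily (ℛ m) :=
    fun m => isLocallyFiniteFamily_mono (hlf m) (hℛsub m)
  have hℛcl : ∀ m, ∀ A ∈ ℛ m, IsClosed A := fun m A hA => hcl m A (hA.1)
  have hℛcover : ∀ x : X, ∃ m, ∃ A ∈ ℛ m, x ∈ A := by
    intro x
    obtain ⟨V, hVopen, hxV, hVfin⟩ := exists_open_witness (hlf n) x
    obtain ⟨F, hFfin, hFprop, hFnhds⟩ := server hlf hcl hk hA4 hVopen hxV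
    have hxF : x ∈ ⋃₀ F := mem_of_mem_nhds hFnhds
    obtain ⟨A, hAF, hxA⟩ := hxF
    obtain ⟨s, ⟨m, rfl⟩, hAm⟩ := (hFprop A hAF).1
    exact ⟨m, A, ⟨hAm, V, hVopen, (hFprop A hAF).2.2, hVfin⟩, hxA⟩
  -- multiplicity sets
  set L : ℕ → ℕ → Set X := fun m k =>
    ⋃₀ {T | ∃ P : Set (Set X), P ⊆ ℛ m ∧ P.Finite ∧ P.ncard = k ∧ T = ⋂₀ P} with hL
  have hLclosed : ∀ m k, IsClosed (L m k) := by
    intro m k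
    have hLfam_lf : IsLocallyFiniteFamily
        {T | ∃ P : Set (Set X), P ⊆ ℛ m ∧ P.Finite ∧ P.ncard = k ∧ T = ⋂₀ P} := by
      intro x
      obtain ⟨Z, hZopen, hxZ, hZfin⟩ := exists_open_witness (hlf m) x
      refine ⟨Z, hZopen.mem_nhds hxZ, ?_⟩
      have himage : {T ∈ {T | ∃ P : Set (Set X), P ⊆ ℛ m ∧ P.Finite ∧ P.ncard = k ∧
          T = ⋂₀ P} | (T ∩ Z).Nonempty} ⊆
          (fun P : Set (Set X) => ⋂₀ P) '' {P | P ⊆ {A ∈ M m | (A ∩ Z).Nonempty}} := by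
        rintro T ⟨⟨P, hP1, hP2, hP3, rfl⟩, w, hw1, hw2⟩
        exact ⟨P, fun C hC => ⟨hℛsub m (hP1 hC), w, hw1 C hC, hw2⟩, rfl⟩
      exact ((hZfin.finite_subsets).image _).subset himage
    refine isClosed_sUnion_of_locallyFinite hLfam_lf ?_
    rintro T ⟨P, hP1, hP2, hP3, rfl⟩
    exact isClosed_sInter (fun C hC => hℛcl m C (hP1 hC))
  -- the strata
  set S : ℕ → ℕ → ℕ → Set X := fun m k j => ⋃₀ {A ∈ M j | A ⊆ (L m (k + 1))ᶜ} with hS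
  have hSclosed : ∀ m k j, IsClosed (S m k j) :=
    fun m k j => sigma_piece_closed hlf hcl j _ (fun A hA => hA.1)
  have hSsub : ∀ m k j, S m k j ⊆ (L m (k + 1))ᶜ := by
    rintro m k j x ⟨A, ⟨hA1, hA2⟩, hxA⟩
    exact hA2 hxA
  -- the pieces
  set 𝒟 : ℕ → ℕ → ℕ → Set (Set X) := fun m k j =>
    {D | ∃ P : Set (Set X), P ⊆ ℛ m ∧ P.Finite ∧ P.Nonempty ∧ P.ncard = k ∧
      D = ⋂₀ P ∩ S m k j ∧ D.Nonempty} with h𝒟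
  have h𝒟cl : ∀ m k j, ∀ D ∈ 𝒟 m k j, IsClosed D := by
    rintro m k j D ⟨P, hP1, hP2, hPne, hP3, rfl, hne⟩
    exact (isClosed_sInter (fun C hC => hℛcl m C (hP1 hC))).inter (hSclosed m k j)
  have h𝒟lf : ∀ m k j, IsLocallyFiniteFamily (𝒟 m k j) := by
    intro m k j x
    obtain ⟨Z, hZopen, hxZ, hZfin⟩ := exists_open_witness (hlf m) x
    refine ⟨Z, hZopen.mem_nhds hxZ, ?_⟩
    have himage : {D ∈ 𝒟 m k j | (D ∩ Z).Nonempty} ⊆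
        (fun P : Set (Set X) => ⋂₀ P ∩ S m k j) ''
          {P | P ⊆ {A ∈ M m | (A ∩ Z).Nonempty}} := by
      rintro D ⟨⟨P, hP1, hP2, hPne, hP3, rfl, hne⟩, w, hw1, hw2⟩
      exact ⟨P, fun C hC => ⟨hℛsub m (hP1 hC), w, hw1.1 C hC, hw2⟩, rfl⟩
    exact ((hZfin.finite_subsets).image _).subset himage
  have h𝒟disj : ∀ m k j, ∀ D ∈ 𝒟 m k j, ∀ D' ∈ 𝒟 m k j, D ≠ D' → Disjoint D D' := by
    rintro m k j D ⟨P, hP1, hP2, hPne, hP3, rfl, hne⟩ D'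
      ⟨P', hP'1, hP'2, hP'ne, hP'3, rfl, hne'⟩ hDne
    have hPne' : P ≠ P' := fun h => hDne (by rw [h])
    rw [Set.disjoint_left]
    intro x hxD hxD'
    have hcard : k + 1 ≤ (P ∪ P').ncard := by
      rcases Set.not_subset.mp (fun hsub => hPne' (Set.eq_of_subset_of_ncard_le hsub
        (le_of_eq (hP'3.trans hP3.symm)) hP'2)) with ⟨C₀, hC₀P, hC₀P'⟩
      calc k + 1 = (insert C₀ P').ncard := by
                rw [Set.ncard_insert_of_notMem hC₀P' hP'2, hP'3]
        _ ≤ (P ∪ P').ncard := Set.ncard_le_ncard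
              (Set.insert_subset (Set.mem_union_left _ hC₀P) Set.subset_union_right)
              (hP2.union hP'2)
    obtain ⟨P'', hP''sub, hP''card⟩ := Set.exists_subset_card_eq hcard
    have hxL : x ∈ L m (k + 1) := by
      refine ⟨⋂₀ P'', ⟨P'', hP''sub.trans (Set.union_subset hP1 hP'1),
        (hP2.union hP'2).subset hP''sub, hP''card, rfl⟩, ?_⟩
      intro C hC
      rcases hP''sub hC with hC | hC
      · exact hxD.1 C hC
      · exact hxD'.1 C hC
    exact (hSsub m k j) hxD.2 hxL
  -- covering by the pieces
  have h𝒟cover : ∀ x : X, ∃ m k j, ∃ D ∈ 𝒟 m k j, x ∈ D := by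
    intro x
    obtain ⟨m, A₀, hA₀, hxA₀⟩ := hℛcover x
    set P : Set (Set X) := {C ∈ ℛ m | x ∈ C} with hP
    have hPfin : P.Finite := point_finite (hℛlf m) x
    have hPne : P.Nonempty := ⟨A₀, hA₀, hxA₀⟩
    set k : ℕ := P.ncard with hkdef
    have hxnotL : x ∉ L m (k + 1) := by
      rintro ⟨T, ⟨P'', hP''1, hP''2, hP''3, rfl⟩, hxT⟩
      have hsub : P'' ⊆ P := fun C hC => ⟨hP''1 hC, hxT C hC⟩
      have hle := Set.ncard_le_ncard hsub hPfin
      rw [hP''3] at hle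
      omega
    have hxS : ∃ j, x ∈ S m k j := by
      have hopen : IsOpen (L m (k + 1))ᶜ := (hLclosed m (k + 1)).isOpen_compl
      have hexh := sigma_exhaust (M := M) hcl hk hopen
      have hx' : x ∈ (L m (k+1))ᶜ := hxnotL
      rw [hexh] at hx'
      exact mem_iUnion.mp hx'
    obtain ⟨j, hxSj⟩ := hxS
    refine ⟨m, k, j, ⋂₀ P ∩ S m k j,
      ⟨P, fun C hC => hC.1, hPfin, hPne, rfl, rfl, ⟨x, fun C hC => hC.2, hxSj⟩⟩,
      fun C hC => hC.2, hxSj⟩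
  -- witnesses for the pieces
  have h𝒟wit : ∀ m k j, ∀ D ∈ 𝒟 m k j,
      ∃ V, IsOpen V ∧ D ⊆ V ∧ {B ∈ M n | (B ∩ V).Nonempty}.Finite := by
    rintro m k j D ⟨P, hP1, hP2, hPne, hP3, rfl, hne⟩
    obtain ⟨C, hC⟩ := hPne
    obtain ⟨hCm, V, hVopen, hCV, hVfin⟩ := hP1 hC
    exact ⟨V, hVopen, fun x hx => hCV (hx.1 C hC), hVfin⟩
  -- per-index construction
  have hper : ∀ m k j : ℕ, ∃ 𝒪 : Set (Set X),
      IsLocallyFiniteFamily 𝒪 ∧ (∀ O ∈ 𝒪, IsOpen O ∧ {A ∈ M n | (A ∩ O).Nonempty}.Finite) ∧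
      (∀ x, x ∈ ⋃₀ (𝒟 m k j) → ∃ O ∈ 𝒪, x ∈ O) := by
    intro m k j
    have hVch : ∀ D : Set X, ∃ V : Set X, D ∈ 𝒟 m k j →
        IsOpen V ∧ D ⊆ V ∧ {B ∈ M n | (B ∩ V).Nonempty}.Finite := by
      intro D
      by_cases hD : D ∈ 𝒟 m k j
      · obtain ⟨V, hV⟩ := h𝒟wit m k j D hD
        exact ⟨V, fun _ => hV⟩
      · exact ⟨∅, fun h => absurd h hD⟩
    choose V hV using hVch
    obtain ⟨G, hG1, hG2⟩ := cwn hlf hcl hmono hk hA4 (h𝒟lf m k j) (h𝒟cl m k j)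
      (h𝒟disj m k j)
    have hT : IsClosed (⋃₀ (𝒟 m k j)) :=
      isClosed_sUnion_of_locallyFinite (h𝒟lf m k j) (h𝒟cl m k j)
    have hΩopen : IsOpen (⋃₀ {O | ∃ D ∈ 𝒟 m k j, O = G D}) := by
      apply isOpen_sUnion
      rintro O ⟨D, hD, rfl⟩
      exact (hG1 D hD).1
    have hTΩ : ⋃₀ (𝒟 m k j) ⊆ ⋃₀ {O | ∃ D ∈ 𝒟 m k j, O = G D} := by
      rintro x ⟨D, hD, hxD⟩
      exact ⟨G D, ⟨D, hD, rfl⟩, (hG1 D hD).2 hxD⟩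
    obtain ⟨Wsh, hWshopen, hTW, hclW⟩ := normal_exists_closure_subset hT hΩopen hTΩ
    refine ⟨{O | ∃ D ∈ 𝒟 m k j, O = G D ∩ Wsh ∩ V D}, ?_, ?_, ?_⟩
    · -- locally finite
      intro v
      by_cases hv : v ∈ closure Wsh
      · have hvΩ := hclW hv
        obtain ⟨O₀, ⟨D₀, hD₀, rfl⟩, hvG⟩ := hvΩ
        refine ⟨G D₀, (hG1 D₀ hD₀).1.mem_nhds hvG, ?_⟩
        have hsub : {O ∈ {O | ∃ D ∈ 𝒟 m k j, O = G D ∩ Wsh ∩ V D} |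
            (O ∩ G D₀).Nonempty} ⊆ {G D₀ ∩ Wsh ∩ V D₀} := by
          rintro O ⟨⟨D, hD, rfl⟩, w, hw1, hw2⟩
          by_cases hDD : D = D₀
          · subst hDD; rfl
          · exact absurd rfl ((hG2 D hD D₀ hD₀ hDD).ne_of_mem hw1.1.1 hw2).elim
        exact (Set.finite_singleton _).subset hsub
      · refine ⟨(closure Wsh)ᶜ, (isClosed_closure.isOpen_compl).mem_nhds hv, ?_⟩
        have hsub : {O ∈ {O | ∃ D ∈ 𝒟 m k j, O = G D ∩ Wsh ∩ V D} |
            (O ∩ (closure Wsh)ᶜ).Nonempty} ⊆ (∅ : Set (Set X)) := by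
          rintro O ⟨⟨D, hD, rfl⟩, w, hw1, hw2⟩
          exact absurd (subset_closure hw1.1.2) hw2
        exact Set.finite_empty.subset hsub
    · rintro O ⟨D, hD, rfl⟩
      refine ⟨((hG1 D hD).1.inter hWshopen).inter (hV D hD).1, ?_⟩
      refine ((hV D hD).2.2).subset ?_
      rintro A ⟨hA1, w, hw1, hw2⟩
      exact ⟨hA1, w, hw1, hw2.2⟩
    · rintro x ⟨D, hD, hxD⟩
      exact ⟨G D ∩ Wsh ∩ V D, ⟨D, hD, rfl⟩,
        ⟨⟨(hG1 D hD).2 hxD, hTW ⟨D, hD, hxD⟩⟩, (hV D hD).2.1 hxD⟩⟩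
  choose 𝒪 h𝒪lf h𝒪prop h𝒪cov using hper
  -- reindex ℕ³ by ℕ
  refine ⟨fun i => 𝒪 ((Denumerable.eqv (ℕ × ℕ × ℕ)).symm i).1
      ((Denumerable.eqv (ℕ × ℕ × ℕ)).symm i).2.1
      ((Denumerable.eqv (ℕ × ℕ × ℕ)).symm i).2.2, ?_, ?_, ?_⟩
  · intro i
    exact h𝒪lf _ _ _
  · intro i
    exact h𝒪prop _ _ _
  · intro x
    obtain ⟨m, k, j, D, hD, hxD⟩ := h𝒟cover x
    obtain ⟨O, hO, hxO⟩ := h𝒪cov m k j x ⟨D, hD, hxD⟩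
    refine ⟨(Denumerable.eqv (ℕ × ℕ × ℕ)) (m, k, j), O, ?_, hxO⟩
    simpa only [Equiv.symm_apply_apply] using hO

/-- A σ-locally finite open base. -/
theorem sigma_base (hlf : ∀ n, IsLocallyFiniteFamily (M n)) (hcl : ∀ n, ∀ A ∈ M n, IsClosed A)
    (hmono : Monotone M) (hk : IsKNetwork (⋃ n, M n)) [FrechetUrysohnSpace X]
    (hA4 : Alpha4Space X) :
    ∃ ℬ : ℕ → Set (Set X), (∀ i, IsLocallyFiniteFamily (ℬ i)) ∧
      (∀ i, ∀ B ∈ ℬ i, IsOpen B) ∧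
      (∀ (x : X) (U : Set X), IsOpen U → x ∈ U → ∃ i, ∃ B ∈ ℬ i, x ∈ B ∧ B ⊆ U) := by
  classical
  have href := fun n => refine hlf hcl hmono hk hA4 n
  choose 𝒲 h𝒲lf h𝒲prop h𝒲cov using href
  set ℬ' : ℕ → ℕ → Set (Set X) := fun n i =>
    {B | ∃ W ∈ 𝒲 n i, ∃ F : Set (Set X), F ⊆ {A ∈ M n | (A ∩ W).Nonempty} ∧
      B = W ∩ interior (⋃₀ F)} with hℬ'
  have hℬ'lf : ∀ n i, IsLocallyFiniteFamily (ℬ' n i) := by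
    intro n i v
    obtain ⟨Z, hZ, hZfin⟩ := h𝒲lf n i v
    refine ⟨Z, hZ, ?_⟩
    have hsub : {B ∈ ℬ' n i | (B ∩ Z).Nonempty} ⊆
        ⋃ W ∈ {W ∈ 𝒲 n i | (W ∩ Z).Nonempty},
          (fun F : Set (Set X) => W ∩ interior (⋃₀ F)) ''
            {F | F ⊆ {A ∈ M n | (A ∩ W).Nonempty}} := by
      rintro B ⟨⟨W, hW, F, hF, rfl⟩, w, hw1, hw2⟩
      refine mem_biUnion ⟨hW, w, hw1.1, hw2⟩ ⟨F, hF, rfl⟩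
    refine (Set.Finite.biUnion hZfin ?_).subset hsub
    intro W hW
    exact ((h𝒲prop n i W hW.1).2.finite_subsets).image _
  have hℬ'open : ∀ n i, ∀ B ∈ ℬ' n i, IsOpen B := by
    rintro n i B ⟨W, hW, F, hF, rfl⟩
    exact (h𝒲prop n i W hW).1.inter isOpen_interior
  have hℬ'base : ∀ (x : X) (U : Set X), IsOpen U → x ∈ U →
      ∃ n i, ∃ B ∈ ℬ' n i, x ∈ B ∧ B ⊆ U := by
    intro x U hU hxU
    obtain ⟨F, hFfin, hFprop, hFnhds⟩ := server hlf hcl hk hA4 hU hxU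
    obtain ⟨n, hn⟩ := exists_level hmono hFfin (fun A hA => (hFprop A hA).1)
    obtain ⟨i, W, hW, hxW⟩ := h𝒲cov n x
    refine ⟨n, i, W ∩ interior (⋃₀ F), ⟨W, hW, F, ?_, rfl⟩,
      ⟨hxW, mem_interior_iff_mem_nhds.mpr hFnhds⟩, ?_⟩
    · intro A hA
      exact ⟨hn hA, x, (hFprop A hA).2.1, hxW⟩
    · intro y hy
      obtain ⟨A, hAF, hyA⟩ := interior_subset hy.2
      exact (hFprop A hAF).2.2 hyA
  refine ⟨fun p => ℬ' ((Denumerable.eqv (ℕ × ℕ)).symm p).1 ((Denumerable.eqv (ℕ × ℕ)).symm p).2,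
    fun p => hℬ'lf _ _, fun p => hℬ'open _ _, ?_⟩
  intro x U hU hxU
  obtain ⟨n, i, B, hB, hxB, hBU⟩ := hℬ'base x U hU hxU
  refine ⟨(Denumerable.eqv (ℕ × ℕ)) (n, i), B, ?_, hxB, hBU⟩
  simpa only [Equiv.symm_apply_apply] using hB

theorem closure_family_lf {𝒮 : Set (Set X)} (h : IsLocallyFiniteFamily 𝒮) (Q : Set X → Prop) :
    IsLocallyFiniteFamily {C | ∃ B ∈ 𝒮, C = closure B ∧ Q B} := by
  intro x
  obtain ⟨V, hVopen, hxV, hfin⟩ := exists_open_witness h x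
  refine ⟨V, hVopen.mem_nhds hxV, ?_⟩
  have hsub : {C ∈ {C | ∃ B ∈ 𝒮, C = closure B ∧ Q B} | (C ∩ V).Nonempty} ⊆
      closure '' {B ∈ 𝒮 | (B ∩ V).Nonempty} := by
    rintro C ⟨⟨B, hB, rfl, hQ⟩, w, hw1, hw2⟩
    refine ⟨B, ⟨hB, ?_⟩, rfl⟩
    rw [Set.inter_comm]
    exact (mem_closure_iff.mp hw1) V hVopen hw2
  exact (hfin.image _).subset hsub

/-- Nagata–Smirnov: a regular (Hausdorff, normal) space with a σ-locally finite open base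
is metrizable. -/
theorem metrizable_of_sigma_base [T2Space X] (hnorm : NormalSpace X)
    (hreg : RegularSpace X) (ℬ : ℕ → Set (Set X)) (hlfB : ∀ i, IsLocallyFiniteFamily (ℬ i))
    (hopenB : ∀ i, ∀ B ∈ ℬ i, IsOpen B)
    (hbase : ∀ (x : X) (U : Set X), IsOpen U → x ∈ U → ∃ i, ∃ B ∈ ℬ i, x ∈ B ∧ B ⊆ U) :
    TopologicalSpace.MetrizableSpace X := by
  classical
  haveI := hnorm
  haveI := hreg
  -- the core sets
  set E : ℕ × ℕ → Set X → Set X := fun p B =>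
    ⋃₀ {C | ∃ B' ∈ ℬ p.2, C = closure B' ∧ closure B' ⊆ B} with hE
  have hEclosed : ∀ p B, IsClosed (E p B) := by
    intro p B
    refine isClosed_sUnion_of_locallyFinite (closure_family_lf (hlfB p.2) _) ?_
    rintro C ⟨B', hB', rfl, h⟩
    exact isClosed_closure
  have hEsub : ∀ p B, E p B ⊆ B := by
    rintro p B z ⟨C, ⟨B', hB', rfl, h⟩, hzC⟩
    exact h hzC
  -- Urysohn functions
  have hgch : ∀ (p : ℕ × ℕ) (B : Set X), ∃ f : X → ℝ, B ∈ ℬ p.1 →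
      (Continuous f ∧ Set.EqOn f 0 Bᶜ ∧ Set.EqOn f 1 (E p B) ∧
        ∀ z, f z ∈ Set.Icc (0 : ℝ) 1) := by
    intro p B
    by_cases hB : B ∈ ℬ p.1
    · have hBopen : IsOpen B := hopenB p.1 B hB
      have hdisj : Disjoint Bᶜ (E p B) := by
        rw [Set.disjoint_left]
        intro z hz1 hz2
        exact hz1 (hEsub p B hz2)
      obtain ⟨f, hf0, hf1, hf01⟩ := exists_continuous_zero_one_of_isClosed
        (isClosed_compl_iff.mpr hBopen) (hEclosed p B) hdisj
      exact ⟨⇑f, fun _ => ⟨f.continuous, hf0, hf1, hf01⟩⟩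
    · exact ⟨fun _ => 0, fun h => absurd h hB⟩
  choose g hg using hgch
  -- the family of pseudometrics
  set d : ℕ × ℕ → X → X → ℝ := fun p x y => ⨆ B : ℬ p.1, |g p B x - g p B y| with hd
  have hbdd : ∀ (p : ℕ × ℕ) (x y : X),
      BddAbove (Set.range fun B : ℬ p.1 => |g p B x - g p B y|) := by
    intro p x y
    refine ⟨1, ?_⟩
    rintro r ⟨B, rfl⟩
    obtain ⟨-, -, -, h01⟩ := hg p B B.2
    have h1 := h01 x
    have h2 := h01 y
    rw [abs_sub_le_iff]
    constructor <;> simp only [Set.mem_Icc] at h1 h2 <;> linarith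
  have hdle : ∀ (p : ℕ × ℕ) (x y : X) (c : ℝ), 0 ≤ c →
      (∀ B : Set X, B ∈ ℬ p.1 → |g p B x - g p B y| ≤ c) → d p x y ≤ c := by
    intro p x y c hc h
    exact Real.iSup_le (fun B => h B B.2) hc
  have hdge : ∀ (p : ℕ × ℕ) (x y : X) (B : Set X) (hB : B ∈ ℬ p.1),
      |g p B x - g p B y| ≤ d p x y := by
    intro p x y B hB
    exact le_ciSup (hbdd p x y) ⟨B, hB⟩
  have hd0 : ∀ p x, d p x x = 0 := by
    intro p x
    refine le_antisymm (hdle p x x 0 le_rfl (fun B hB => by simp)) ?_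
    exact Real.iSup_nonneg (fun B => abs_nonneg _)
  have hdnonneg : ∀ p x y, 0 ≤ d p x y :=
    fun p x y => Real.iSup_nonneg (fun B => abs_nonneg _)
  have hdcomm : ∀ p x y, d p x y = d p y x := by
    intro p x y
    simp only [hd]
    congr 1
    funext B
    exact abs_sub_comm _ _
  have hdtri : ∀ p x y z, d p x z ≤ d p x y + d p y z := by
    intro p x y z
    refine hdle p x z _ (add_nonneg (hdnonneg p x y) (hdnonneg p y z)) ?_
    intro B hB
    calc |g p B x - g p B z| ≤ |g p B x - g p B y| + |g p B y - g p B z| :=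
          abs_sub_le _ _ _
      _ ≤ d p x y + d p y z := add_le_add (hdge p x y B hB) (hdge p y z B hB)
  have hdone : ∀ p x y, d p x y ≤ 1 := by
    intro p x y
    refine hdle p x y 1 zero_le_one ?_
    intro B hB
    obtain ⟨-, -, -, h01⟩ := hg p B hB
    have h1 := h01 x
    have h2 := h01 y
    rw [abs_sub_le_iff]
    constructor <;> simp only [Set.mem_Icc] at h1 h2 <;> linarith
  -- the local smallness of each pseudometric
  have hdsmall : ∀ (p : ℕ × ℕ) (x : X) (ε : ℝ), 0 < ε →
      ∃ Z, IsOpen Z ∧ x ∈ Z ∧ ∀ y ∈ Z, d p x y ≤ ε := by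
    intro p x ε hε
    obtain ⟨V, hVopen, hxV, hVfin⟩ := exists_open_witness (hlfB p.1) x
    set T : Set (Set X) := {B ∈ ℬ p.1 | (B ∩ V).Nonempty} with hT
    set Z : Set X := V ∩ ⋂ B ∈ T, {y | |g p B x - g p B y| < ε} with hZ
    have hZopen : IsOpen Z := by
      refine hVopen.inter (hVfin.isOpen_biInter ?_)
      intro B hB
      have hcont : Continuous fun y => |g p B x - g p B y| :=
        (continuous_const.sub ((hg p B hB.1).1)).abs
      exact isOpen_Iio.preimage hcont
    have hxZ : x ∈ Z := by
      refine ⟨hxV, ?_⟩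
      refine Set.mem_biInter ?_
      intro B hB
      simp [hε]
    refine ⟨Z, hZopen, hxZ, ?_⟩
    intro y hy
    refine hdle p x y ε (le_of_lt hε) ?_
    intro B hB
    by_cases hBT : B ∈ T
    · exact le_of_lt (Set.mem_iInter₂.mp hy.2 B hBT)
    · have hBV : B ∩ V = ∅ := by
        by_contra hne
        exact hBT ⟨hB, Set.nonempty_iff_ne_empty.mpr hne⟩
      have hxB : x ∈ Bᶜ := fun hxB => (Set.eq_empty_iff_forall_notMem.mp hBV x) ⟨hxB, hxV⟩
      have hyB : y ∈ Bᶜ := fun hyB => (Set.eq_empty_iff_forall_notMem.mp hBV y) ⟨hyB, hy.1⟩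
      obtain ⟨-, h0, -, -⟩ := hg p B hB
      rw [h0 hxB, h0 hyB]
      simpa using le_of_lt hε
  -- detection
  have hdetect : ∀ (x : X) (U : Set X), IsOpen U → x ∈ U →
      ∃ p : ℕ × ℕ, ∀ y, d p x y < 1 / 2 → y ∈ U := by
    intro x U hU hxU
    obtain ⟨i, B, hB, hxB, hBU⟩ := hbase x U hU hxU
    have hBopen : IsOpen B := hopenB i B hB
    obtain ⟨C, ⟨hCnhds, hCclosed⟩, hCB⟩ := (closed_nhds_basis x).mem_iff.mp
      (hBopen.mem_nhds hxB)
    obtain ⟨j, B', hB', hxB', hB'C⟩ := hbase x (interior C) isOpen_interior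
      (mem_interior_iff_mem_nhds.mpr hCnhds)
    have hclB' : closure B' ⊆ B := by
      calc closure B' ⊆ closure (interior C) := closure_mono hB'C
        _ ⊆ closure C := closure_mono interior_subset
        _ = C := hCclosed.closure_eq
        _ ⊆ B := hCB
    have hxE : x ∈ E (i, j) B := ⟨closure B', ⟨B', hB', rfl, hclB'⟩, subset_closure hxB'⟩
    refine ⟨(i, j), ?_⟩
    intro y hy
    obtain ⟨-, h0, h1, -⟩ := hg (i, j) B hB
    have hgx : g (i, j) B x = 1 := h1 hxE
    have hle := hdge (i, j) x y B hB
    rw [hgx] at hle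
    have : |1 - g (i, j) B y| < 1 / 2 := lt_of_le_of_lt hle hy
    have hgy : (0 : ℝ) < g (i, j) B y := by
      rw [abs_sub_lt_iff] at this
      linarith [this.1]
    by_contra hyU
    have hyB : y ∈ Bᶜ := fun hyB => hyU (hBU hyB)
    rw [h0 hyB] at hgy
    exact lt_irrefl _ hgy
  -- the global distance
  set e : ℕ × ℕ ≃ ℕ := Denumerable.eqv (ℕ × ℕ) with he
  set dd : ℕ → X → X → ℝ := fun k => d (e.symm k) with hdd
  set D : X → X → ℝ := fun x y => ∑' k : ℕ, (1 / 2) ^ k * dd k x y with hD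
  have hterm_nonneg : ∀ k (x y : X), 0 ≤ (1 / 2 : ℝ) ^ k * dd k x y :=
    fun k x y => mul_nonneg (by positivity) (hdnonneg _ x y)
  have hterm_le : ∀ k (x y : X), (1 / 2 : ℝ) ^ k * dd k x y ≤ (1 / 2) ^ k := by
    intro k x y
    calc (1 / 2 : ℝ) ^ k * dd k x y ≤ (1 / 2) ^ k * 1 :=
          mul_le_mul_of_nonneg_left (hdone _ x y) (by positivity)
      _ = (1 / 2) ^ k := mul_one _
  have hsummable : ∀ x y : X, Summable (fun k => (1 / 2 : ℝ) ^ k * dd k x y) := by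
    intro x y
    exact Summable.of_nonneg_of_le (fun k => hterm_nonneg k x y) (fun k => hterm_le k x y)
      summable_geometric_two
  have hDnonneg : ∀ x y, 0 ≤ D x y :=
    fun x y => tsum_nonneg (fun k => hterm_nonneg k x y)
  have hDself : ∀ x, D x x = 0 := by
    intro x
    have : (fun k => (1 / 2 : ℝ) ^ k * dd k x x) = fun k => 0 := by
      funext k
      rw [hdd]
      simp [hd0]
    rw [hD]
    simp only [this, tsum_zero]
  have hDcomm : ∀ x y, D x y = D y x := by
    intro x y
    simp only [hD]
    congr 1
    funext k
    simp only [hdd]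
    rw [hdcomm]
  have hDtri : ∀ x y z, D x z ≤ D x y + D y z := by
    intro x y z
    have h1 : ∀ k, (1 / 2 : ℝ) ^ k * dd k x z ≤
        (1 / 2) ^ k * dd k x y + (1 / 2) ^ k * dd k y z := by
      intro k
      rw [← mul_add]
      exact mul_le_mul_of_nonneg_left (hdtri _ x y z) (by positivity)
    calc D x z ≤ ∑' k, ((1 / 2 : ℝ) ^ k * dd k x y + (1 / 2) ^ k * dd k y z) :=
          Summable.tsum_le_tsum h1 (hsummable x z) ((hsummable x y).add (hsummable y z))
      _ = D x y + D y z := Summable.tsum_add (hsummable x y) (hsummable y z)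
  have hDge : ∀ (k : ℕ) (x y : X), (1 / 2 : ℝ) ^ k * dd k x y ≤ D x y := by
    intro k x y
    exact Summable.le_tsum (hsummable x y) k (fun j _ => hterm_nonneg j x y)
  -- detection for D
  have hDdetect : ∀ (x : X) (U : Set X), IsOpen U → x ∈ U →
      ∃ ε > 0, ∀ y, D x y < ε → y ∈ U := by
    intro x U hU hxU
    obtain ⟨p, hp⟩ := hdetect x U hU hxU
    set k : ℕ := e p with hk
    refine ⟨(1 / 2) ^ k * (1 / 2), by positivity, ?_⟩
    intro y hy
    refine hp y ?_
    have h1 : (1 / 2 : ℝ) ^ k * dd k x y ≤ D x y := hDge k x y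
    have h2 : (1 / 2 : ℝ) ^ k * dd k x y < (1 / 2) ^ k * (1 / 2) := lt_of_le_of_lt h1 hy
    have h3 : dd k x y < 1 / 2 := by
      have hpos : (0 : ℝ) < (1 / 2) ^ k := by positivity
      exact (mul_lt_mul_iff_right₀ hpos).mp h2
    have heq : dd k x y = d p x y := by
      simp only [hdd, hk, Equiv.symm_apply_apply]
    rwa [heq] at h3
  -- neighborhoods for D
  have hDnhds : ∀ (x : X) (ε : ℝ), 0 < ε → ∃ Z, IsOpen Z ∧ x ∈ Z ∧ ∀ y ∈ Z, D x y < ε := by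
    intro x ε hε
    obtain ⟨K, hK⟩ := exists_pow_lt_of_lt_one (show (0:ℝ) < ε / 4 by linarith)
      (show (1:ℝ)/2 < 1 by norm_num)
    set ε' : ℝ := ε / (4 * (K + 1)) with hε'
    have hε'pos : 0 < ε' := by positivity
    have hch : ∀ k : ℕ, ∃ Z, IsOpen Z ∧ x ∈ Z ∧ ∀ y ∈ Z, dd k x y ≤ ε' :=
      fun k => hdsmall (e.symm k) x ε' hε'pos
    choose Z hZopen hxZ hZd using hch
    refine ⟨⋂ k ∈ Finset.range K, Z k, ?_, ?_, ?_⟩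
    · exact isOpen_biInter_finset (fun k _ => hZopen k)
    · exact Set.mem_biInter (fun k _ => hxZ k)
    · intro y hy
      have hsplit := Summable.sum_add_tsum_nat_add (f := fun k => (1 / 2 : ℝ) ^ k * dd k x y) K
        (hsummable x y)
      have hhead : ∑ k ∈ Finset.range K, (1 / 2 : ℝ) ^ k * dd k x y ≤ ε / 4 := by
        calc ∑ k ∈ Finset.range K, (1 / 2 : ℝ) ^ k * dd k x y
            ≤ ∑ k ∈ Finset.range K, ε' := by
              refine Finset.sum_le_sum ?_
              intro k hk
              have h1 : dd k x y ≤ ε' := hZd k y (Set.mem_iInter₂.mp hy k hk)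
              calc (1 / 2 : ℝ) ^ k * dd k x y ≤ 1 * dd k x y := by
                    refine mul_le_mul_of_nonneg_right ?_ (hdnonneg _ x y)
                    exact pow_le_one₀ (by norm_num) (by norm_num)
                _ = dd k x y := one_mul _
                _ ≤ ε' := h1
          _ = K * ε' := by rw [Finset.sum_const, Finset.card_range, nsmul_eq_mul]
          _ ≤ ε / 4 := by
              rw [hε']
              have hKnn : (0:ℝ) ≤ (K : ℝ) := Nat.cast_nonneg K
              calc (K : ℝ) * (ε / (4 * ((K : ℝ) + 1))) = ε * ((K : ℝ) / (4 * ((K : ℝ) + 1))) := by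
                    ring
                _ ≤ ε * (1 / 4) := by
                    refine mul_le_mul_of_nonneg_left ?_ (le_of_lt hε)
                    rw [div_le_div_iff₀ (by positivity) (by norm_num)]
                    linarith
                _ = ε / 4 := by ring
      have htail : ∑' k : ℕ, (1 / 2 : ℝ) ^ (k + K) * dd (k + K) x y ≤ ε / 2 := by
        have h1 : ∑' k : ℕ, (1 / 2 : ℝ) ^ (k + K) * dd (k + K) x y ≤
            ∑' k : ℕ, (1 / 2 : ℝ) ^ (k + K) := by
          refine Summable.tsum_le_tsum (fun k => hterm_le (k + K) x y) ?_ ?_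
          · exact (hsummable x y).comp_injective (add_left_injective K)
          · exact summable_geometric_two.comp_injective (add_left_injective K)
        have h2 : ∑' k : ℕ, (1 / 2 : ℝ) ^ (k + K) = (1 / 2 : ℝ) ^ K * 2 := by
          have : ∀ k : ℕ, (1 / 2 : ℝ) ^ (k + K) = (1 / 2) ^ K * (1 / 2) ^ k := by
            intro k
            rw [pow_add, mul_comm]
          rw [tsum_congr this, tsum_mul_left, tsum_geometric_two]
        rw [h2] at h1
        calc ∑' k : ℕ, (1 / 2 : ℝ) ^ (k + K) * dd (k + K) x y ≤ (1 / 2 : ℝ) ^ K * 2 := h1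
          _ ≤ ε / 2 := by nlinarith [hK]
      have : D x y = (∑ k ∈ Finset.range K, (1 / 2 : ℝ) ^ k * dd k x y) +
          ∑' k : ℕ, (1 / 2 : ℝ) ^ (k + K) * dd (k + K) x y := by
        rw [hD]
        exact hsplit.symm
      rw [this]
      linarith
  -- separation
  have hDeq : ∀ x y, D x y = 0 → x = y := by
    intro x y hxy
    by_contra hne
    have hUy : IsOpen ({y}ᶜ : Set X) := isClosed_singleton.isOpen_compl
    have hxUy : x ∈ ({y}ᶜ : Set X) := by simpa using hne
    obtain ⟨ε, hεpos, hball⟩ := hDdetect x {y}ᶜ hUy hxUy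
    have : y ∈ ({y}ᶜ : Set X) := hball y (by rw [hxy]; exact hεpos)
    simp at this
  -- topology characterization
  have hH : ∀ s : Set X, IsOpen s ↔ ∀ x ∈ s, ∃ ε > 0, ∀ y, D x y < ε → y ∈ s := by
    intro s
    constructor
    · intro hs x hx
      exact hDdetect x s hs hx
    · intro h
      rw [isOpen_iff_mem_nhds]
      intro x hx
      obtain ⟨ε, hεpos, hball⟩ := h x hx
      obtain ⟨Z, hZopen, hxZ, hZball⟩ := hDnhds x ε hεpos
      refine Filter.mem_of_superset (hZopen.mem_nhds hxZ) ?_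
      intro y hy
      exact hball y (hZball y hy)
  letI : MetricSpace X := MetricSpace.ofDistTopology D hDself hDcomm hDtri hH hDeq
  exact inferInstance

/-- The main reverse implication. -/
theorem metrizable_of_aleph {X : Type*} [TopologicalSpace X] (hreg : RegularSpace X)
    (hT2 : T2Space X) (N : Set (Set X)) (f : ℕ → Set (Set X))
    (hflf : ∀ n, IsLocallyFiniteFamily (f n)) (hNf : N = ⋃ n, f n) (hkN : IsKNetwork N)
    (hFU : FrechetUrysohnSpace X) (hA4 : Alpha4Space X) :
    TopologicalSpace.MetrizableSpace X := by
  classical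
  haveI := hreg
  haveI := hT2
  haveI := hFU
  subst hNf
  set M : ℕ → Set (Set X) := fun n => {C | ∃ B ∈ ⋃ i ∈ Set.Iic n, f i, C = closure B} with hM
  have hmono : Monotone M := by
    intro a b hab C hC
    obtain ⟨B, hB, rfl⟩ := hC
    obtain ⟨i, hi, hBi⟩ := mem_iUnion₂.mp hB
    exact ⟨B, mem_iUnion₂.mpr ⟨i, le_trans hi hab, hBi⟩, rfl⟩
  have hcl : ∀ n, ∀ A ∈ M n, IsClosed A := by
    rintro n A ⟨B, hB, rfl⟩
    exact isClosed_closure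
  have hlf : ∀ n, IsLocallyFiniteFamily (M n) := by
    intro n
    have hunion : IsLocallyFiniteFamily (⋃ i ∈ Set.Iic n, f i) := by
      intro x
      have hch : ∀ i : ℕ, ∃ V, IsOpen V ∧ x ∈ V ∧ {A ∈ f i | (A ∩ V).Nonempty}.Finite :=
        fun i => exists_open_witness (hflf i) x
      choose V hVo hxV hVfin using hch
      set W : Set X := ⋂ i ∈ Finset.range (n + 1), V i with hW
      have hWopen : IsOpen W := isOpen_biInter_finset (fun i _ => hVo i)
      have hxW : x ∈ W := Set.mem_biInter (fun i _ => hxV i)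
      refine ⟨W, hWopen.mem_nhds hxW, ?_⟩
      have hsub : {A ∈ ⋃ i ∈ Set.Iic n, f i | (A ∩ W).Nonempty} ⊆
          ⋃ i ∈ Finset.range (n + 1), {A ∈ f i | (A ∩ V i).Nonempty} := by
        rintro A ⟨hA, w, hw1, hw2⟩
        obtain ⟨i, hi, hAi⟩ := mem_iUnion₂.mp hA
        have hirange : i ∈ Finset.range (n + 1) := Finset.mem_range.mpr (Nat.lt_succ_of_le hi)
        refine mem_biUnion hirange ⟨hAi, w, hw1, ?_⟩
        exact Set.mem_iInter₂.mp hw2 i hirange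
      exact (Set.Finite.biUnion (Finset.range (n + 1)).finite_toSet
        (fun i _ => hVfin i)).subset hsub
    have hMsub : M n ⊆ {C | ∃ B ∈ ⋃ i ∈ Set.Iic n, f i, C = closure B ∧ True} := by
      rintro C ⟨B, hB, rfl⟩
      exact ⟨B, hB, rfl, trivial⟩
    exact isLocallyFiniteFamily_mono (closure_family_lf hunion (fun _ => True)) hMsub
  have hk : IsKNetwork (⋃ n, M n) := by
    intro K U hK hU hKU
    obtain ⟨V, hVopen, hKV, hclV⟩ := hK.exists_isOpen_closure_subset
      (hU.mem_nhdsSet.mpr hKU)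
    obtain ⟨F, hFN, hFfin, hcov, hFV⟩ := hkN K V hK hVopen hKV
    refine ⟨closure '' F, ?_, hFfin.image _, ?_, ?_⟩
    · rintro C ⟨B, hB, rfl⟩
      obtain ⟨s, ⟨i, rfl⟩, hBi⟩ := hFN hB
      exact mem_iUnion.mpr ⟨i, B, mem_iUnion₂.mpr ⟨i, le_refl i, hBi⟩, rfl⟩
    · intro y hy
      obtain ⟨B, hBF, hyB⟩ := hcov hy
      exact ⟨closure B, ⟨B, hBF, rfl⟩, subset_closure hyB⟩
    · rintro y ⟨C, ⟨B, hBF, rfl⟩, hyC⟩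
      have : closure B ⊆ closure V := closure_mono (fun z hz => hFV ⟨B, hBF, hz⟩)
      exact hclV (this hyC)
  haveI hnormal : NormalSpace X := normal hlf hcl hmono hk hA4
  obtain ⟨ℬ, h1, h2, h3⟩ := sigma_base hlf hcl hmono hk hA4
  exact metrizable_of_sigma_base hnormal hreg ℬ h1 h2 h3

end AlephProof

/-- An ℵ-space is metrizable iff it is a Fréchet–Urysohn (α₄)-space. -/
theorem alephSpace_metrizable_iff_frechetUrysohn_alpha4
    (X : Type*) [TopologicalSpace X] (hX : IsAlephSpace X) :
    TopologicalSpace.MetrizableSpace X ↔ (FrechetUrysohnSpace X ∧ Alpha4Space X) := by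
  constructor
  · intro h
    haveI := h
    exact ⟨inferInstance, Alpha4Space.of_firstCountable X⟩
  · rintro ⟨hFU, hA4⟩
    obtain ⟨hreg, hT2, N, ⟨f, hflf, hNf⟩, hkN⟩ := hX
    exact AlephProof.metrizable_of_aleph hreg hT2 N f hflf hNf hkN hFU hA4
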